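/- arXiv:2012.00704 — 2 statements merged into one kernel-verified Lean document; each statement's English description precedes it below -/
import Mathlib

section
/- Let P(x) = Σ_{i=0}^Δ a_i x^i be a univariate real polynomial of degree Δ > 0 with |a_Δ| ≥ d for some d > 0. Let w > 0 and x_l ∈ ℝ. If |P(x)| ≤ w for all x ∈ [x_l, x_l + t] with t ≥ 0, then t ≤ (Δ+1)^3 · (w/d)^(1/Δ). -/
open Polynomial Finset

theorem stmt_0 (Δ : ℕ) (hΔ : 0 < Δ) (P : Polynomial ℝ) (hdeg : P.natDegree = Δ)
    (d : ℝ) (hd : 0 < d) (hlead : d ≤ |P.coeff Δ|)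
    (w : ℝ) (hw : 0 < w) (xl t : ℝ) (ht : 0 ≤ t)
    (hbound : ∀ x ∈ Set.Icc xl (xl + t), |P.eval x| ≤ w) :
    t ≤ ((Δ : ℝ) + 1) ^ 3 * (w / d) ^ ((1 : ℝ) / Δ) := by
  have hwd : (0:ℝ) < w / d := div_pos hw hd
  rcases eq_or_lt_of_le ht with h0 | ht0
  · rw [← h0]
    positivity
  have hΔR : (0:ℝ) < Δ := by exact_mod_cast hΔ
  set h : ℝ := t / Δ with hh
  have hhpos : 0 < h := div_pos ht0 hΔR
  set v : Fin (Δ+1) → ℝ := fun i => xl + i * h with hv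
  -- difference of nodes
  have hdiff : ∀ i j : Fin (Δ+1), i ≠ j → h ≤ |v i - v j| := by
    intro i j hij
    have h1 : v i - v j = ((i:ℝ) - (j:ℝ)) * h := by simp [hv]; ring
    have h2 : (1:ℝ) ≤ |(i:ℝ) - (j:ℝ)| := by
      have : ((i:ℤ)) ≠ ((j:ℤ)) := by
        simpa [Fin.ext_iff] using (fun hc => hij (Fin.ext (by exact_mod_cast hc)))
      have h3 : (1:ℤ) ≤ |(i:ℤ) - (j:ℤ)| := Int.one_le_abs (sub_ne_zero.mpr this)
      have : ((i:ℝ) - (j:ℝ)) = (((i:ℤ) - (j:ℤ) : ℤ) : ℝ) := by push_cast; ring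
      rw [this, ← Int.cast_abs]
      exact_mod_cast h3
    rw [h1, abs_mul, abs_of_pos hhpos]
    nlinarith [abs_nonneg ((i:ℝ) - (j:ℝ))]
  have hinj : Set.InjOn v (univ : Finset (Fin (Δ+1))) := by
    intro i _ j _ hij
    by_contra hne
    have := hdiff i j hne
    rw [hij, sub_self, abs_zero] at this
    linarith
  have hdeglt : P.degree < (#(univ : Finset (Fin (Δ+1))) : ℕ) := by
    refine lt_of_le_of_lt P.degree_le_natDegree ?_
    rw [hdeg]
    simp only [card_univ, Fintype.card_fin]
    exact_mod_cast Nat.lt_succ_self Δ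
  have hPinterp := Lagrange.eq_interpolate hinj hdeglt
  -- coefficient of basis polynomial
  have hbasis : ∀ i : Fin (Δ+1),
      (Lagrange.basis univ v i).coeff Δ = ∏ j ∈ univ.erase i, (v i - v j)⁻¹ := by
    intro i
    have hne : ∀ j ∈ univ.erase i, v i ≠ v j := by
      intro j hj
      have hij : j ≠ i := (mem_erase.mp hj).1
      intro hc
      exact hij (hinj (by simp) (by simp) hc.symm)
    have hnd : (Lagrange.basis univ v i).natDegree = Δ := by
      rw [Lagrange.natDegree_basis hinj (mem_univ i)]
      simp
    have hlc : (Lagrange.basis univ v i).coeff Δ = (Lagrange.basis univ v i).leadingCoeff := by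
      rw [Polynomial.leadingCoeff, hnd]
    rw [hlc, Lagrange.basis, Polynomial.leadingCoeff_prod]
    refine Finset.prod_congr rfl fun j hj => ?_
    rw [Lagrange.basisDivisor, Polynomial.leadingCoeff_mul, Polynomial.leadingCoeff_C,
      leadingCoeff_X_sub_C, mul_one]
  -- expression for coeff Δ of P
  have hcoeff : P.coeff Δ = ∑ i : Fin (Δ+1),
      P.eval (v i) * ∏ j ∈ univ.erase i, (v i - v j)⁻¹ := by
    conv_lhs => rw [hPinterp]
    rw [Lagrange.interpolate_apply, Polynomial.finset_sum_coeff]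
    refine Finset.sum_congr rfl fun i _ => ?_
    rw [Polynomial.coeff_C_mul, hbasis i]
  -- bound each term
  have hterm : ∀ i : Fin (Δ+1),
      |P.eval (v i) * ∏ j ∈ univ.erase i, (v i - v j)⁻¹| ≤ w * (h⁻¹) ^ Δ := by
    intro i
    have hmem : v i ∈ Set.Icc xl (xl + t) := by
      constructor
      · simp [hv]
        positivity
      · simp only [hv, add_le_add_iff_left]
        have hi : (i:ℝ) ≤ Δ := by
          have := Fin.is_le i
          exact_mod_cast this
        calc (i:ℝ) * h ≤ Δ * h := by nlinarith
          _ = t := by rw [hh]; field_simp [hΔR.ne']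
    have heval := hbound _ hmem
    have hprod : |∏ j ∈ univ.erase i, (v i - v j)⁻¹| ≤ (h⁻¹) ^ Δ := by
      rw [Finset.abs_prod]
      have hcard : #(univ.erase i) = Δ := by simp
      calc ∏ j ∈ univ.erase i, |(v i - v j)⁻¹|
          ≤ ∏ _j ∈ univ.erase i, h⁻¹ := by
            refine Finset.prod_le_prod (fun j _ => abs_nonneg _) fun j hj => ?_
            rw [abs_inv]
            exact inv_anti₀ hhpos (hdiff i j (mem_erase.mp hj).1.symm)
        _ = (h⁻¹) ^ Δ := by rw [Finset.prod_const, hcard]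
    rw [abs_mul]
    exact mul_le_mul heval hprod (abs_nonneg _) hw.le
  -- main inequality on coefficient
  have hmain : d ≤ ((Δ:ℝ) + 1) * w * (h⁻¹) ^ Δ := by
    calc d ≤ |P.coeff Δ| := hlead
      _ ≤ ∑ i : Fin (Δ+1), |P.eval (v i) * ∏ j ∈ univ.erase i, (v i - v j)⁻¹| := by
          rw [hcoeff]; exact Finset.abs_sum_le_sum_abs _ _
      _ ≤ ∑ _i : Fin (Δ+1), w * (h⁻¹) ^ Δ := Finset.sum_le_sum fun i _ => hterm i
      _ = ((Δ:ℝ) + 1) * (w * (h⁻¹) ^ Δ) := by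
          rw [Finset.sum_const, card_univ, Fintype.card_fin, nsmul_eq_mul]; push_cast; try ring
      _ = ((Δ:ℝ) + 1) * w * (h⁻¹) ^ Δ := by ring
  have hpow : h ^ Δ ≤ ((Δ:ℝ) + 1) * (w / d) := by
    have hhΔ : (0:ℝ) < h ^ Δ := pow_pos hhpos Δ
    have h1 : d * h ^ Δ ≤ ((Δ:ℝ) + 1) * w := by
      have := mul_le_mul_of_nonneg_right hmain hhΔ.le
      calc d * h ^ Δ ≤ ((Δ:ℝ)+1) * w * (h⁻¹)^Δ * h^Δ := this
        _ = ((Δ:ℝ)+1) * w * ((h⁻¹ * h)^Δ) := by rw [mul_pow]; ring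
        _ = ((Δ:ℝ)+1) * w := by rw [inv_mul_cancel₀ hhpos.ne', one_pow, mul_one]
    calc h ^ Δ = d * h ^ Δ / d := by field_simp
      _ ≤ ((Δ:ℝ)+1) * w / d := by gcongr
      _ = ((Δ:ℝ)+1) * (w/d) := by ring
  -- take Δ-th root
  have hΔnz : (Δ:ℝ) ≠ 0 := hΔR.ne'
  have hroot : h ≤ ((Δ:ℝ) + 1) * (w / d) ^ ((1:ℝ)/Δ) := by
    have h1 : h = (h ^ Δ) ^ ((1:ℝ)/Δ) := by
      rw [← Real.rpow_natCast h Δ, ← Real.rpow_mul hhpos.le]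
      rw [mul_one_div, div_self hΔnz, Real.rpow_one]
    have h2 : (h ^ Δ) ^ ((1:ℝ)/Δ) ≤ (((Δ:ℝ) + 1) * (w / d)) ^ ((1:ℝ)/Δ) :=
      Real.rpow_le_rpow (pow_pos hhpos Δ).le hpow (by positivity)
    have h3 : (((Δ:ℝ) + 1) * (w / d)) ^ ((1:ℝ)/Δ)
        = ((Δ:ℝ) + 1) ^ ((1:ℝ)/Δ) * (w / d) ^ ((1:ℝ)/Δ) :=
      Real.mul_rpow (by positivity) hwd.le
    have h4 : ((Δ:ℝ) + 1) ^ ((1:ℝ)/Δ) ≤ ((Δ:ℝ) + 1) := by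
      calc ((Δ:ℝ) + 1) ^ ((1:ℝ)/Δ) ≤ ((Δ:ℝ) + 1) ^ (1:ℝ) := by
            apply Real.rpow_le_rpow_of_exponent_le (by linarith)
            rw [div_le_one hΔR]
            exact_mod_cast hΔ
        _ = (Δ:ℝ) + 1 := Real.rpow_one _
    calc h = (h ^ Δ) ^ ((1:ℝ)/Δ) := h1
      _ ≤ ((Δ:ℝ) + 1) ^ ((1:ℝ)/Δ) * (w / d) ^ ((1:ℝ)/Δ) := by rw [← h3]; exact h2
      _ ≤ ((Δ:ℝ) + 1) * (w / d) ^ ((1:ℝ)/Δ) := by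
          apply mul_le_mul_of_nonneg_right h4 (Real.rpow_nonneg hwd.le _)
  have hth : t = Δ * h := by rw [hh]; field_simp [hΔnz]
  have hrpos : (0:ℝ) ≤ (w / d) ^ ((1:ℝ)/Δ) := Real.rpow_nonneg hwd.le _
  calc t = Δ * h := hth
    _ ≤ (Δ:ℝ) * (((Δ:ℝ) + 1) * (w / d) ^ ((1:ℝ)/Δ)) := by
        apply mul_le_mul_of_nonneg_left hroot hΔR.le
    _ = ((Δ:ℝ) * ((Δ:ℝ) + 1)) * (w / d) ^ ((1:ℝ)/Δ) := by ring
    _ ≤ ((Δ:ℝ) + 1) ^ 3 * (w / d) ^ ((1:ℝ)/Δ) := by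
        apply mul_le_mul_of_nonneg_right _ hrpos
        nlinarith [hΔR, sq_nonneg ((Δ:ℝ)), mul_pos hΔR hΔR]
end

section
/- Let P and Q be real polynomials of degree at most Δ, and suppose i is the largest index at which the coefficients of P and Q differ, with i ≥ 1 and |coeff_i(P) − coeff_i(Q)| ≥ d > 0. If |P(x) − Q(x)| ≤ w for all x in an interval [x₁, x₂], then x₂ − x₁ ≤ (i+1)³ (w/d)^(1/i). -/
open Polynomial

lemma finite_diff_bound : ∀ (n : ℕ) (R : Polynomial ℝ) (x h w : ℝ), 0 ≤ h →
    R.natDegree ≤ n → (∀ t ∈ Set.Icc x (x + n * h), |R.eval t| ≤ w) →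
    |R.coeff n| * n.factorial * h ^ n ≤ 2 ^ n * w := by
  intro n
  induction n with
  | zero =>
    intro R x h w hh hdeg hb
    have := hb x (by refine ⟨le_refl x, ?_⟩; push_cast; linarith)
    have hR : R.eval x = R.coeff 0 := by
      rw [eval_eq_sum_range' (Nat.lt_succ_of_le hdeg)]
      simp
    simpa [hR] using this
  | succ n ih =>
    intro R x h w hh hdeg hb
    set S : Polynomial ℝ := taylor h R - R with hS
    have hcoeff : ∀ m, n ≤ m →
        S.coeff m = (m + 1 : ℝ) * R.coeff (m + 1) * h := by
      intro m hm
      have hdm : (hasseDeriv m R).natDegree < 2 := by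
        have := natDegree_hasseDeriv_le R m
        omega
      rw [hS, coeff_sub, taylor_coeff, eval_eq_sum_range' hdm]
      simp [Finset.sum_range_succ, hasseDeriv_coeff, Nat.add_comm 1 m,
        Nat.choose_succ_self_right]
    have hSdeg : S.natDegree ≤ n := by
      rw [natDegree_le_iff_coeff_eq_zero]
      intro m hm
      have h1 : S.coeff m = (m + 1 : ℝ) * R.coeff (m + 1) * h :=
        hcoeff m (le_of_lt hm)
      have h2 : R.coeff (m + 1) = 0 :=
        coeff_eq_zero_of_natDegree_lt (by omega)
      rw [h1, h2]; ring
    have hSb : ∀ t ∈ Set.Icc x (x + n * h), |S.eval t| ≤ 2 * w := by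
      intro t ht
      obtain ⟨ht1, ht2⟩ := ht
      have hth : t ∈ Set.Icc x (x + (n + 1 : ℕ) * h) := by
        constructor
        · exact ht1
        · push_cast; nlinarith
      have hth2 : t + h ∈ Set.Icc x (x + (n + 1 : ℕ) * h) := by
        constructor
        · linarith
        · push_cast; nlinarith
      have e : S.eval t = R.eval (t + h) - R.eval t := by
        rw [hS, eval_sub, taylor_eval]
      rw [e]
      calc |R.eval (t + h) - R.eval t| ≤ |R.eval (t + h)| + |R.eval t| :=
            abs_sub _ _
        _ ≤ w + w := add_le_add (hb _ hth2) (hb _ hth)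
        _ = 2 * w := by ring
    have := ih S x h (2 * w) hh hSdeg hSb
    have hc : S.coeff n = (n + 1 : ℝ) * R.coeff (n + 1) * h := hcoeff n le_rfl
    rw [hc] at this
    have habs : |(n + 1 : ℝ) * R.coeff (n + 1) * h| =
        (n + 1 : ℝ) * |R.coeff (n + 1)| * h := by
      rw [abs_mul, abs_mul, abs_of_nonneg hh, abs_of_nonneg (by positivity : (0:ℝ) ≤ (n:ℝ)+1)]
    rw [habs] at this
    have hfac : ((n + 1).factorial : ℝ) = (n + 1 : ℝ) * n.factorial := by
      push_cast [Nat.factorial_succ]; ring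
    calc |R.coeff (n + 1)| * (n + 1).factorial * h ^ (n + 1)
        = (n + 1 : ℝ) * |R.coeff (n + 1)| * h * (n.factorial * h ^ n) := by
          rw [hfac]; ring
      _ ≤ 2 ^ n * (2 * w) := by
          calc (n + 1 : ℝ) * |R.coeff (n + 1)| * h * (n.factorial * h ^ n)
              = (n + 1 : ℝ) * |R.coeff (n + 1)| * h * n.factorial * h ^ n := by ring
            _ ≤ 2 ^ n * (2 * w) := this
      _ = 2 ^ (n + 1) * w := by ring

theorem stmt_4 (Δ i : ℕ) (P Q : Polynomial ℝ)
    (hP : P.natDegree ≤ Δ) (hQ : Q.natDegree ≤ Δ)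
    (hi1 : 1 ≤ i) (hdiff : P.coeff i ≠ Q.coeff i)
    (hlargest : ∀ j, i < j → P.coeff j = Q.coeff j)
    (d : ℝ) (hd : 0 < d) (hdle : d ≤ |P.coeff i - Q.coeff i|)
    (w : ℝ) (hw : 0 < w) (x₁ x₂ : ℝ) (hx : x₁ ≤ x₂)
    (hbound : ∀ x ∈ Set.Icc x₁ x₂, |P.eval x - Q.eval x| ≤ w) :
    x₂ - x₁ ≤ ((i : ℝ) + 1) ^ 3 * (w / d) ^ ((1 : ℝ) / i) := by
  set R : Polynomial ℝ := P - Q with hR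
  have hi0 : (0 : ℝ) < i := by exact_mod_cast hi1
  set h : ℝ := (x₂ - x₁) / i with hh
  have hh0 : 0 ≤ h := div_nonneg (by linarith) (le_of_lt hi0)
  have hne : (i : ℝ) ≠ 0 := ne_of_gt hi0
  have hxx : x₁ + (i : ℝ) * h = x₂ := by rw [hh]; field_simp; ring
  have hdeg : R.natDegree ≤ i := by
    rw [natDegree_le_iff_coeff_eq_zero]
    intro m hm
    rw [hR, coeff_sub, hlargest m hm, sub_self]
  have hb : ∀ t ∈ Set.Icc x₁ (x₁ + (i : ℝ) * h), |R.eval t| ≤ w := by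
    intro t ht
    rw [hxx] at ht
    rw [hR, eval_sub]; exact hbound t ht
  have key := finite_diff_bound i R x₁ h w hh0 hdeg hb
  have hci : d ≤ |R.coeff i| := by simpa [hR, coeff_sub] using hdle
  have hfac : (1 : ℝ) ≤ i.factorial := by exact_mod_cast i.factorial_pos
  have hkey2 : d * h ^ i ≤ 2 ^ i * w := by
    nlinarith [mul_nonneg (sub_nonneg.2 hci) (pow_nonneg hh0 i),
      mul_nonneg (sub_nonneg.2 hfac) (mul_nonneg (abs_nonneg (R.coeff i)) (pow_nonneg hh0 i))]
  have hpow : h ^ i ≤ 2 ^ i * (w / d) := by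
    rw [← mul_div_assoc, le_div_iff₀ hd]
    nlinarith
  -- take i-th roots
  have hwd : 0 ≤ w / d := by positivity
  have h1 : h = (h ^ i) ^ ((1 : ℝ) / i) := by
    rw [← Real.rpow_natCast h i, ← Real.rpow_mul hh0]
    rw [mul_one_div, div_self (ne_of_gt hi0), Real.rpow_one]
  have h2 : ((2 : ℝ) ^ i * (w / d)) ^ ((1 : ℝ) / i) = 2 * (w / d) ^ ((1 : ℝ) / i) := by
    rw [Real.mul_rpow (by positivity) hwd, ← Real.rpow_natCast (2 : ℝ) i,
      ← Real.rpow_mul (by norm_num), mul_one_div, div_self (ne_of_gt hi0), Real.rpow_one]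
  have h3 : h ≤ 2 * (w / d) ^ ((1 : ℝ) / i) := by
    rw [h1, ← h2]
    exact Real.rpow_le_rpow (pow_nonneg hh0 i) hpow (by positivity)
  have h4 : x₂ - x₁ = (i : ℝ) * h := by rw [hh]; field_simp
  rw [h4]
  have h5 : (i : ℝ) * h ≤ (i : ℝ) * (2 * (w / d) ^ ((1 : ℝ) / i)) :=
    mul_le_mul_of_nonneg_left h3 (le_of_lt hi0)
  have h6 : (0 : ℝ) ≤ (w / d) ^ ((1 : ℝ) / i) := Real.rpow_nonneg hwd _
  have hi1' : (1 : ℝ) ≤ i := by exact_mod_cast hi1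
  have h7 : (2 : ℝ) * i ≤ ((i : ℝ) + 1) ^ 3 := by nlinarith [pow_nonneg (le_of_lt hi0) 3, sq_nonneg (i : ℝ), le_of_lt hi0]
  calc (i : ℝ) * h ≤ (i : ℝ) * (2 * (w / d) ^ ((1 : ℝ) / i)) := h5
    _ = (2 * i) * (w / d) ^ ((1 : ℝ) / i) := by ring
    _ ≤ ((i : ℝ) + 1) ^ 3 * (w / d) ^ ((1 : ℝ) / i) :=
        mul_le_mul_of_nonneg_right h7 h6
end
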